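/- (Entropy bounds for the a posteriori covariance) Under the stated assumptions, the a posteriori error covariance Σ̄ := (Cᵀ V⁻¹ C + Σ⁻¹)⁻¹ satisfies n·ln( 1/(M + 1/λ_min(W)) ) ≤ ln det(Σ̄) ≤ n·ln(1/m). -/

import Mathlib

open Matrix

private lemma dot_mulVec_left {k : Type*} [Fintype k] (A : Matrix k k ℝ) (y z : k → ℝ) :
    (A *ᵥ y) ⬝ᵥ z = y ⬝ᵥ (Aᵀ *ᵥ z) := by
  rw [dotProduct_comm, dotProduct_mulVec, ← mulVec_transpose, dotProduct_comm]

private lemma dot_self_eigenvectorBasis {k : Type*} [Fintype k] [DecidableEq k]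
    {T : Matrix k k ℝ} (hT : T.IsHermitian) (i : k) :
    ⇑(hT.eigenvectorBasis i) ⬝ᵥ ⇑(hT.eigenvectorBasis i) = 1 := by
  have h2 : (inner ℝ (hT.eigenvectorBasis i) (hT.eigenvectorBasis i) : ℝ) = 1 := by
    rw [real_inner_self_eq_norm_sq, hT.eigenvectorBasis.orthonormal.1 i]; norm_num
  rw [EuclideanSpace.inner_eq_star_dotProduct, star_trivial] at h2
  exact h2

private lemma eig_ge {k : Type*} [Fintype k] [DecidableEq k] {T : Matrix k k ℝ}
    (hT : T.IsHermitian) {α : ℝ} (h : (T - α • (1 : Matrix k k ℝ)).PosSemidef) (i : k) :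
    α ≤ hT.eigenvalues i := by
  have hv := hT.mulVec_eigenvectorBasis i
  have h1 := dot_self_eigenvectorBasis hT i
  have h2 := h.dotProduct_mulVec_nonneg (⇑(hT.eigenvectorBasis i))
  rw [star_trivial, sub_mulVec, dotProduct_sub, smul_mulVec, one_mulVec, hv,
    dotProduct_smul, dotProduct_smul, smul_eq_mul, smul_eq_mul, h1] at h2
  linarith

private lemma eig_le {k : Type*} [Fintype k] [DecidableEq k] {T : Matrix k k ℝ}
    (hT : T.IsHermitian) {β : ℝ} (h : (β • (1 : Matrix k k ℝ) - T).PosSemidef) (i : k) :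
    hT.eigenvalues i ≤ β := by
  have hv := hT.mulVec_eigenvectorBasis i
  have h1 := dot_self_eigenvectorBasis hT i
  have h2 := h.dotProduct_mulVec_nonneg (⇑(hT.eigenvectorBasis i))
  rw [star_trivial, sub_mulVec, dotProduct_sub, smul_mulVec, one_mulVec, hv,
    dotProduct_smul, dotProduct_smul, smul_eq_mul, smul_eq_mul, h1] at h2
  linarith

private lemma sub_smul_one_posSemidef {k : Type*} [Fintype k] [DecidableEq k]
    {Wm : Matrix k k ℝ} (hH : Wm.IsHermitian) {α : ℝ} (h : ∀ i, α ≤ hH.eigenvalues i) :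
    (Wm - α • (1 : Matrix k k ℝ)).PosSemidef := by
  have hU : (hH.eigenvectorUnitary : Matrix k k ℝ) *
      star (hH.eigenvectorUnitary : Matrix k k ℝ) = 1 :=
    mem_unitaryGroup_iff.mp hH.eigenvectorUnitary.2
  have key : Wm - α • (1 : Matrix k k ℝ) = (hH.eigenvectorUnitary : Matrix k k ℝ) *
      (diagonal (fun i => hH.eigenvalues i - α)) *
      (hH.eigenvectorUnitary : Matrix k k ℝ)ᴴ := by
    rw [← star_eq_conjTranspose]
    conv_lhs => rw [hH.spectral_theorem]
    have hco : (RCLike.ofReal ∘ hH.eigenvalues : k → ℝ) = hH.eigenvalues := by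
      rw [RCLike.ofReal_real_eq_id, Function.id_comp]
    rw [hco]
    have hdiag : diagonal (fun i => hH.eigenvalues i - α) =
        diagonal hH.eigenvalues - diagonal (fun _ => α) := by
      rw [← diagonal_sub]
    rw [hdiag, mul_sub, sub_mul, ← smul_one_eq_diagonal]
    congr 1
    rw [mul_smul_comm, smul_mul_assoc, mul_one, hU]
  rw [key]
  exact (posSemidef_diagonal_iff.mpr fun i => sub_nonneg.mpr (h i)).mul_mul_conjTranspose_same _

open scoped MatrixOrder in
private lemma inv_smul_one_sub_inv_posSemidef {k : Type*} [Fintype k] [DecidableEq k]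
    {S : Matrix k k ℝ} (hS : S.PosDef) {lam : ℝ} (hlam : 0 < lam)
    (h : (S - lam • (1 : Matrix k k ℝ)).PosSemidef) :
    (lam⁻¹ • (1 : Matrix k k ℝ) - S⁻¹).PosSemidef := by
  have hdet : IsUnit S.det := hS.det_pos.ne'.isUnit
  set Q := CFC.sqrt S with hQdef
  have hQ : Q.PosSemidef := (CFC.sqrt_nonneg S).posSemidef
  have hQQ : Q * Q = S := CFC.sqrt_mul_sqrt_self S hS.posSemidef.nonneg
  have hQSQ : Q * S * Q = S * S := by rw [← hQQ]; noncomm_ring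
  have hSt : Sᵀ = S := by rw [← conjTranspose_eq_transpose_of_trivial, hS.isHermitian.eq]
  refine PosSemidef.of_dotProduct_mulVec_nonneg ?_ ?_
  · have h1 : (lam⁻¹ • (1 : Matrix k k ℝ)).IsHermitian := by
      rw [smul_one_eq_diagonal]; exact isHermitian_diagonal _
    exact h1.sub hS.inv.isHermitian
  · intro x
    rw [star_trivial]
    set y := S⁻¹ *ᵥ x with hy
    have hx : x = S *ᵥ y := by rw [hy, mulVec_mulVec, mul_nonsing_inv _ hdet, one_mulVec]
    have key : 0 ≤ y ⬝ᵥ ((S * S - lam • S) *ᵥ y) := by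
      have hid : S * S - lam • S = Q * (S - lam • (1 : Matrix k k ℝ)) * Qᴴ := by
        rw [hQ.isHermitian.eq, mul_sub, sub_mul, mul_smul_comm, mul_one, smul_mul_assoc,
          hQQ, hQSQ]
      rw [hid]
      have := (h.mul_mul_conjTranspose_same Q).dotProduct_mulVec_nonneg y
      rwa [star_trivial] at this
    rw [sub_mulVec, dotProduct_sub, smul_mulVec, dotProduct_smul, smul_eq_mul] at key
    rw [sub_mulVec, dotProduct_sub, smul_mulVec, one_mulVec, dotProduct_smul, smul_eq_mul]
    have e1 : x ⬝ᵥ x = y ⬝ᵥ ((S * S) *ᵥ y) := by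
      conv_lhs => rw [hx]
      rw [dot_mulVec_left, mulVec_mulVec, hSt]
    have e2 : x ⬝ᵥ (S⁻¹ *ᵥ x) = y ⬝ᵥ (S *ᵥ y) := by
      rw [← hy]
      conv_lhs => rw [hx]
      rw [dot_mulVec_left, hSt]
    rw [e1, e2]
    have hb : lam * (y ⬝ᵥ (S *ᵥ y)) ≤ y ⬝ᵥ ((S * S) *ᵥ y) := by linarith
    have h3 := mul_le_mul_of_nonneg_left hb (inv_pos.mpr hlam).le
    rw [← mul_assoc, inv_mul_cancel₀ hlam.ne', one_mul] at h3
    linarith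

/-- Entropy bounds for the a posteriori covariance `S̄ = (Cᵀ V⁻¹ C + S⁻¹)⁻¹`:
`n·ln(1/(M + 1/λ_min(W))) ≤ ln det S̄ ≤ n·ln(1/m)`, where
`m = min_i c_i²/σ_i²` and `M = max_i c_i²/σ_i²`. -/
theorem riccati_posterior_logdet_bounds {n : ℕ} (hn : 1 ≤ n)
    (A W S : Matrix (Fin n) (Fin n) ℝ)
    (c σ : Fin n → ℝ) (hc : ∀ i, 0 < c i) (hσ : ∀ i, 0 < σ i)
    (hW : W.PosDef) (hS : S.PosDef)
    (hric : S = A * S * Aᵀ -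
        A * S * (Matrix.diagonal c)ᵀ *
          (Matrix.diagonal c * S * (Matrix.diagonal c)ᵀ +
            Matrix.diagonal fun i => σ i ^ 2)⁻¹ *
          Matrix.diagonal c * S * Aᵀ + W) :
    (n : ℝ) * Real.log (1 / ((⨆ i, c i ^ 2 / σ i ^ 2) + 1 / ⨅ j, hW.1.eigenvalues j)) ≤
        Real.log (((Matrix.diagonal c)ᵀ * (Matrix.diagonal fun i => σ i ^ 2)⁻¹ *
          Matrix.diagonal c + S⁻¹)⁻¹).det ∧
      Real.log (((Matrix.diagonal c)ᵀ * (Matrix.diagonal fun i => σ i ^ 2)⁻¹ *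
          Matrix.diagonal c + S⁻¹)⁻¹).det ≤
        (n : ℝ) * Real.log (1 / ⨅ i, c i ^ 2 / σ i ^ 2) := by
  classical
  haveI : Nonempty (Fin n) := ⟨⟨0, hn⟩⟩
  set Cm := Matrix.diagonal c with hCm
  set Vm := Matrix.diagonal (fun i => σ i ^ 2) with hVm
  have hCmT : Cmᵀ = Cm := diagonal_transpose c
  have hCmH : Cmᴴ = Cm := by rw [conjTranspose_eq_transpose_of_trivial, hCmT]
  have hCpos : Cm.PosDef := posDef_diagonal_iff.mpr hc
  have hVpos : Vm.PosDef := posDef_diagonal_iff.mpr fun i => pow_pos (hσ i) 2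
  have hVinv : Vm⁻¹ = Matrix.diagonal (fun i => (σ i ^ 2)⁻¹) := by
    refine inv_eq_right_inv ?_
    rw [hVm, diagonal_mul_diagonal, ← diagonal_one]
    exact congrArg diagonal (funext fun i => mul_inv_cancel₀ (pow_pos (hσ i) 2).ne')
  have hDexpr : Cmᵀ * Vm⁻¹ * Cm = Matrix.diagonal (fun i => c i ^ 2 / σ i ^ 2) := by
    rw [hCmT, hVinv, hCm, diagonal_mul_diagonal, diagonal_mul_diagonal]
    exact congrArg diagonal (funext fun i => by rw [div_eq_mul_inv, pow_two]; ring)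
  -- 1. Riccati implies S - W is PSD
  rw [hCmT] at hric
  set P := Cm * S * Cm with hPdef
  have hPpsd : P.PosSemidef := by
    have := hS.posSemidef.mul_mul_conjTranspose_same Cm
    rwa [hCmH] at this
  have hPpos : P.PosDef := by
    refine PosDef.of_dotProduct_mulVec_pos hPpsd.1 (fun x hx => ?_)
    have hxC : Cm *ᵥ x ≠ 0 := by
      intro h0
      exact hx ((mulVec_injective_iff_isUnit.mpr hCpos.isUnit) (by simpa using h0))
    have := hS.dotProduct_mulVec_pos hxC
    rw [star_trivial] at this ⊢
    rw [hPdef, ← mulVec_mulVec, ← mulVec_mulVec]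
    rwa [dot_mulVec_left Cm x (S *ᵥ (Cm *ᵥ x)), hCmT] at this
  have hPdet : IsUnit P.det := hPpos.det_pos.ne'.isUnit
  have hVdet : IsUnit Vm.det := hVpos.det_pos.ne'.isUnit
  have hCdet : IsUnit Cm.det := hCpos.det_pos.ne'.isUnit
  have hKpos : (P + Vm).PosDef := hPpos.add hVpos
  have hKdet : IsUnit (P + Vm).det := hKpos.det_pos.ne'.isUnit
  have hXpos : (P⁻¹ + Vm⁻¹).PosDef := hPpos.inv.add hVpos.inv
  have h1 : P⁻¹ + Vm⁻¹ = Vm⁻¹ * (P + Vm) * P⁻¹ := by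
    rw [mul_add, add_mul, mul_assoc Vm⁻¹ P P⁻¹, mul_nonsing_inv P hPdet, mul_one,
      nonsing_inv_mul Vm hVdet, one_mul, add_comm]
  have h2 : (P⁻¹ + Vm⁻¹)⁻¹ = P * (P + Vm)⁻¹ * Vm := by
    rw [h1, Matrix.mul_inv_rev (Vm⁻¹ * (P + Vm)) P⁻¹, nonsing_inv_nonsing_inv P hPdet,
      Matrix.mul_inv_rev Vm⁻¹ (P + Vm), nonsing_inv_nonsing_inv Vm hVdet, mul_assoc]
    rw [hPdef]
    noncomm_ring
  have h3 : Cm * (S - S * Cm * (P + Vm)⁻¹ * Cm * S) * Cm = P - P * (P + Vm)⁻¹ * P := by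
    rw [hPdef]; noncomm_ring
  have h4 : P - P * (P + Vm)⁻¹ * P = P * (P + Vm)⁻¹ * Vm := by
    have h5 : P * (P + Vm)⁻¹ * (P + Vm) = P := by
      rw [mul_assoc, nonsing_inv_mul _ hKdet, mul_one]
    calc P - P * (P + Vm)⁻¹ * P = P * (P + Vm)⁻¹ * (P + Vm) - P * (P + Vm)⁻¹ * P := by rw [h5]
      _ = P * (P + Vm)⁻¹ * Vm := by rw [mul_add]; abel
  have hcc : Cm⁻¹ * Cm = 1 := nonsing_inv_mul Cm hCdet
  have hcc' : Cm * Cm⁻¹ = 1 := mul_nonsing_inv Cm hCdet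
  have hE : S - S * Cm * (P + Vm)⁻¹ * Cm * S = Cm⁻¹ * (P⁻¹ + Vm⁻¹)⁻¹ * Cm⁻¹ := by
    have hCEC : Cm * (S - S * Cm * (P + Vm)⁻¹ * Cm * S) * Cm = (P⁻¹ + Vm⁻¹)⁻¹ := by
      rw [h3, h4, h2]
    calc S - S * Cm * (P + Vm)⁻¹ * Cm * S
        = Cm⁻¹ * Cm * (S - S * Cm * (P + Vm)⁻¹ * Cm * S) * (Cm * Cm⁻¹) := by
          rw [hcc, hcc', one_mul, mul_one]
      _ = Cm⁻¹ * (Cm * (S - S * Cm * (P + Vm)⁻¹ * Cm * S) * Cm) * Cm⁻¹ := by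
          noncomm_ring
      _ = Cm⁻¹ * (P⁻¹ + Vm⁻¹)⁻¹ * Cm⁻¹ := by rw [hCEC]
  have hEpsd : (S - S * Cm * (P + Vm)⁻¹ * Cm * S).PosSemidef := by
    rw [hE]
    have := (hXpos.inv.posSemidef).mul_mul_conjTranspose_same Cm⁻¹
    rwa [conjTranspose_nonsing_inv, hCmH] at this
  have hSW : (S - W).PosSemidef := by
    have hSW_eq : S - W = A * (S - S * Cm * (P + Vm)⁻¹ * Cm * S) * Aᵀ := by
      conv_lhs => rw [hric]
      noncomm_ring
    rw [hSW_eq, ← conjTranspose_eq_transpose_of_trivial]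
    exact hEpsd.mul_mul_conjTranspose_same A
  -- 2. scalar bounds
  set lam := ⨅ j, hW.1.eigenvalues j with hlamdef
  have hlamle : ∀ j, lam ≤ hW.1.eigenvalues j := fun j =>
    ciInf_le (Finite.bddBelow_range _) j
  have hlampos : 0 < lam := by
    obtain ⟨j, hj⟩ := exists_eq_ciInf_of_finite (f := hW.1.eigenvalues)
    rw [hlamdef, ← hj]
    exact hW.eigenvalues_pos j
  have hdpos : ∀ i, 0 < c i ^ 2 / σ i ^ 2 := fun i =>
    div_pos (pow_pos (hc i) 2) (pow_pos (hσ i) 2)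
  set m := ⨅ i, c i ^ 2 / σ i ^ 2 with hmdef
  have hmle : ∀ i, m ≤ c i ^ 2 / σ i ^ 2 := fun i => ciInf_le (Finite.bddBelow_range _) i
  have hmpos : 0 < m := by
    obtain ⟨i, hi⟩ := exists_eq_ciInf_of_finite (f := fun i => c i ^ 2 / σ i ^ 2)
    rw [hmdef, ← hi]
    exact hdpos i
  set M := ⨆ i, c i ^ 2 / σ i ^ 2 with hMdef
  have hMle : ∀ i, c i ^ 2 / σ i ^ 2 ≤ M := fun i => le_ciSup (f := fun i => c i ^ 2 / σ i ^ 2) (Finite.bddAbove_range _) i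
  have hMpos : 0 < M := lt_of_lt_of_le (hdpos ⟨0, hn⟩) (hMle ⟨0, hn⟩)
  have hbpos : 0 < M + 1 / lam := by positivity
  -- 3. PSD bounds on T
  set T := Matrix.diagonal (fun i => c i ^ 2 / σ i ^ 2) + S⁻¹ with hTdef
  have hTpos : T.PosDef := (posDef_diagonal_iff.mpr hdpos).add hS.inv
  have hWlam : (W - lam • (1 : Matrix (Fin n) (Fin n) ℝ)).PosSemidef :=
    sub_smul_one_posSemidef hW.1 hlamle
  have hSlam : (S - lam • (1 : Matrix (Fin n) (Fin n) ℝ)).PosSemidef := by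
    have heq : S - lam • (1 : Matrix (Fin n) (Fin n) ℝ) = (S - W) + (W - lam • 1) := by abel
    rw [heq]
    exact hSW.add hWlam
  have hSinvB : (lam⁻¹ • (1 : Matrix (Fin n) (Fin n) ℝ) - S⁻¹).PosSemidef :=
    inv_smul_one_sub_inv_posSemidef hS hlampos hSlam
  have hTlow : (T - m • (1 : Matrix (Fin n) (Fin n) ℝ)).PosSemidef := by
    have heq : T - m • (1 : Matrix (Fin n) (Fin n) ℝ) =
        (Matrix.diagonal (fun i => c i ^ 2 / σ i ^ 2) - Matrix.diagonal (fun _ => m)) + S⁻¹ := by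
      rw [smul_one_eq_diagonal, hTdef]; abel
    rw [heq, diagonal_sub]
    exact (posSemidef_diagonal_iff.mpr fun i => sub_nonneg.mpr (hmle i)).add hS.inv.posSemidef
  have hThigh : ((M + 1 / lam) • (1 : Matrix (Fin n) (Fin n) ℝ) - T).PosSemidef := by
    have heq : (M + 1 / lam) • (1 : Matrix (Fin n) (Fin n) ℝ) - T =
        (Matrix.diagonal (fun _ => M) - Matrix.diagonal (fun i => c i ^ 2 / σ i ^ 2)) +
          (lam⁻¹ • (1 : Matrix (Fin n) (Fin n) ℝ) - S⁻¹) := by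
      rw [add_smul, smul_one_eq_diagonal (a := M), one_div, hTdef]; abel
    rw [heq, diagonal_sub]
    exact (posSemidef_diagonal_iff.mpr fun i => sub_nonneg.mpr (hMle i)).add hSinvB
  -- 4. determinant bounds
  have hdeig : T.det = ∏ i, hTpos.1.eigenvalues i := by
    rw [hTpos.1.det_eq_prod_eigenvalues]
    simp [RCLike.ofReal_real_eq_id]
  have hdlow : m ^ n ≤ T.det := by
    rw [hdeig]
    calc m ^ n = ∏ _i : Fin n, m := by simp [Finset.prod_const]
      _ ≤ ∏ i, hTpos.1.eigenvalues i :=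
        Finset.prod_le_prod (fun i _ => hmpos.le) (fun i _ => eig_ge hTpos.1 hTlow i)
  have hdhigh : T.det ≤ (M + 1 / lam) ^ n := by
    rw [hdeig]
    calc ∏ i, hTpos.1.eigenvalues i ≤ ∏ _i : Fin n, (M + 1 / lam) :=
        Finset.prod_le_prod (fun i _ => (hmpos.trans_le (eig_ge hTpos.1 hTlow i)).le)
          (fun i _ => eig_le hTpos.1 hThigh i)
      _ = (M + 1 / lam) ^ n := by simp [Finset.prod_const]
  -- 5. conclude
  rw [hDexpr]
  rw [Matrix.det_nonsing_inv, Ring.inverse_eq_inv, Real.log_inv]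
  constructor
  · rw [one_div, Real.log_inv]
    have hlog : Real.log T.det ≤ (n : ℝ) * Real.log (M + 1 / lam) := by
      calc Real.log T.det ≤ Real.log ((M + 1 / lam) ^ n) := Real.log_le_log hTpos.det_pos hdhigh
        _ = (n : ℝ) * Real.log (M + 1 / lam) := Real.log_pow (M + 1 / lam) n
    linarith
  · rw [one_div, Real.log_inv]
    have hlog : (n : ℝ) * Real.log m ≤ Real.log T.det := by
      calc (n : ℝ) * Real.log m = Real.log (m ^ n) := (Real.log_pow m n).symm
        _ ≤ Real.log T.det := Real.log_le_log (pow_pos hmpos n) hdlow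
    linarith
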